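/- Let R be a 3-row graph with s columns such that R_C is eulerian, and suppose the subgraph R[V_1] induced by the first row V_1 = {v_{1j} : 1 ≤ j ≤ s} is connected. Then R has an amiable coloring. -/

import Mathlib

noncomputable section
open Finset
open scoped Classical

private abbrev Z2 := ZMod 2

private def chi (P : Prop) : Z2 := if P then 1 else 0

private lemma chi_pos {P : Prop} (h : P) : chi P = 1 := if_pos h
private lemma chi_neg {P : Prop} (h : ¬P) : chi P = 0 := if_neg h
private lemma chi_congr {P Q : Prop} (h : P ↔ Q) : chi P = chi Q := by
  by_cases hp : P
  · rw [chi_pos hp, chi_pos (h.mp hp)]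
  · rw [chi_neg hp, chi_neg (fun hq => hp (h.mpr hq))]

private lemma z2_add_self (a : Z2) : a + a = 0 := by
  have : ∀ a : Z2, a + a = 0 := by decide
  exact this a
private lemma z2_cases (a : Z2) : a = 0 ∨ a = 1 := by
  have : ∀ a : Z2, a = 0 ∨ a = 1 := by decide
  exact this a

private lemma chi_and (P Q : Prop) : chi (P ∧ Q) = chi P * chi Q := by
  by_cases hp : P <;> by_cases hq : Q
  · rw [chi_pos ⟨hp, hq⟩, chi_pos hp, chi_pos hq]; ring
  · rw [chi_neg (fun h => hq h.2), chi_neg hq, mul_zero]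
  · rw [chi_neg (fun h => hp h.1), chi_neg hp, zero_mul]
  · rw [chi_neg (fun h => hp h.1), chi_neg hp, zero_mul]

private lemma chi_or_disjoint {P Q : Prop} (h : ¬(P ∧ Q)) :
    chi (P ∨ Q) = chi P + chi Q := by
  by_cases hp : P <;> by_cases hq : Q
  · exact absurd ⟨hp, hq⟩ h
  · rw [chi_pos (Or.inl hp), chi_pos hp, chi_neg hq, add_zero]
  · rw [chi_pos (Or.inr hq), chi_neg hp, chi_pos hq, zero_add]
  · rw [chi_neg (by tauto), chi_neg hp, chi_neg hq, add_zero]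

private lemma sum_chi_eq {α : Type*} [Fintype α] (a : α) :
    ∑ x : α, chi (x = a) = 1 := by
  rw [Finset.sum_eq_single_of_mem a (mem_univ a)]
  · exact chi_pos rfl
  · intro b _ hb; exact chi_neg hb

private lemma sum_chi_eq' {α : Type*} [Fintype α] (a : α) :
    ∑ x : α, chi (a = x) = 1 := by
  rw [Finset.sum_eq_single_of_mem a (mem_univ a)]
  · exact chi_pos rfl
  · intro b _ hb; exact chi_neg (fun h => hb h.symm)

private lemma symsum {α : Type*} [Fintype α] (M : α → α → Z2)
    (hsym : ∀ a b, M a b = M b a) (hdiag : ∀ a, M a a = 0) :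
    ∑ a : α, ∑ b : α, M a b = 0 := by
  rw [← Finset.sum_product']
  refine Finset.sum_ninvolution (fun p => (p.2, p.1)) ?_ ?_ ?_ ?_
  · intro p; rw [hsym p.1 p.2]; exact z2_add_self _
  · intro p hp hcontra
    apply hp
    have h1 : p.2 = p.1 := congrArg Prod.fst hcontra
    calc M p.1 p.2 = M p.2 p.2 := by rw [h1]
    _ = 0 := hdiag _
  · intro p; exact mem_univ _
  · intro p; rfl

private lemma even_iff_z2 (n : ℕ) : Even n ↔ ((n : Z2) = 0) := by
  rw [ZMod.natCast_eq_zero_iff]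
  constructor
  · rintro ⟨k, rfl⟩; exact ⟨k, by omega⟩
  · rintro ⟨k, rfl⟩; exact ⟨k, by omega⟩

private lemma ncard_to_sum {α : Type*} [Fintype α] (P : α → Prop) :
    (({x | P x}.ncard : ℕ) : Z2) = ∑ x : α, chi (P x) := by
  classical
  rw [Set.ncard_eq_toFinset_card', Set.toFinset_setOf, Finset.card_filter]
  push_cast
  exact Finset.sum_congr rfl (fun x _ => by by_cases h : P x <;> simp [h, chi_pos, chi_neg, chi])


private lemma key_step {n : ℕ} (G : SimpleGraph (Fin n)) (j z : Fin n)
    (hd : G.dist j z ≠ 0) : ∃ b, G.Adj j b ∧ G.dist b z < G.dist j z := by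
  obtain ⟨w, hw⟩ := SimpleGraph.exists_walk_of_dist_ne_zero hd
  cases w with
  | nil => exact absurd hw.symm hd
  | @cons _ b _ hadj q =>
      refine ⟨b, hadj, ?_⟩
      have h1 := SimpleGraph.dist_le q
      have h2 : q.length + 1 = G.dist j z := by simpa using hw
      omega

private lemma forest_exists {n : ℕ} (G : SimpleGraph (Fin n)) :
    ∃ (p : Fin n → Fin n) (dep : Fin n → ℕ) (rt : Fin n → Fin n),
      (∀ j, p j ≠ j → G.Adj j (p j)) ∧
      (∀ j, p j ≠ j → dep (p j) < dep j) ∧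
      (∀ j, p j = j ↔ j = rt j) ∧
      (∀ j, G.Reachable j (rt j)) ∧
      (∀ j k, G.Reachable j k → rt j = rt k) := by
  classical
  set rt : Fin n → Fin n := fun j => (G.connectedComponentMk j).out with hrtdef
  have hreach : ∀ j, G.Reachable j (rt j) := by
    intro j
    have h : G.connectedComponentMk (rt j) = G.connectedComponentMk j :=
      (G.connectedComponentMk j).out_eq
    exact (SimpleGraph.ConnectedComponent.eq.mp h).symm
  have hrteq : ∀ j k, G.Reachable j k → rt j = rt k := by
    intro j k h
    have : G.connectedComponentMk j = G.connectedComponentMk k :=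
      SimpleGraph.ConnectedComponent.eq.mpr h
    simp only [hrtdef, this]
  have key2 : ∀ j, ∃ b, (j ≠ rt j → G.Adj j b ∧ G.dist b (rt j) < G.dist j (rt j)) ∧
      (j = rt j → b = j) := by
    intro j
    by_cases h : j = rt j
    · exact ⟨j, fun hc => absurd h hc, fun _ => rfl⟩
    · have hd : G.dist j (rt j) ≠ 0 := by
        rw [SimpleGraph.dist_ne_zero_iff_ne_and_reachable]
        exact ⟨h, hreach j⟩
      obtain ⟨b, h1, h2⟩ := key_step G j (rt j) hd
      exact ⟨b, fun _ => ⟨h1, h2⟩, fun hc => absurd hc h⟩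
  choose p hp1 hp2 using key2
  have hne : ∀ j, p j ≠ j → j ≠ rt j := fun j h e => h (hp2 j e)
  refine ⟨p, fun j => G.dist j (rt j), rt, ?_, ?_, ?_, hreach, hrteq⟩
  · intro j h; exact (hp1 j (hne j h)).1
  · intro j h
    have hadj := (hp1 j (hne j h)).1
    have hlt := (hp1 j (hne j h)).2
    have heq : rt (p j) = rt j := hrteq _ _ hadj.reachable.symm
    show G.dist (p j) (rt (p j)) < G.dist j (rt j)
    rw [heq]; exact hlt
  · intro j
    constructor
    · intro hpj
      by_contra h
      have hadj := (hp1 j h).1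
      rw [hpj] at hadj
      exact G.irrefl hadj
    · exact hp2 j

private lemma iterate_fixed {α : Type*} (p : α → α) (j : α) (h : p j = j) :
    ∀ m, p^[m] j = j := by
  intro m
  induction m with
  | zero => rfl
  | succ m ih => rw [Function.iterate_succ_apply', ih, h]

private lemma realize_boundary {n : ℕ} (G : SimpleGraph (Fin n)) (q : Fin n → Z2)
    (hq : ∀ j0, (∑ k ∈ univ.filter (fun k => G.Reachable k j0), q k) = 0) :
    ∃ (p : Fin n → Fin n) (dep : Fin n → ℕ) (β : Fin n → Z2),
      (∀ j, p j ≠ j → G.Adj j (p j)) ∧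
      (∀ j, p j ≠ j → dep (p j) < dep j) ∧
      (∀ j, (if p j = j then 0 else β j) +
          ∑ j' ∈ univ.filter (fun j' => p j' = j ∧ j' ≠ j), β j' = q j) := by
  classical
  obtain ⟨p, dep, rt, hadj, hdec, hroot, hreach, hrteq⟩ := forest_exists G
  set Anc : Fin n → Fin n → Prop := fun j k => ∃ m, p^[m] k = j with hAnc
  set x : Fin n → Z2 := fun j => ∑ k ∈ univ.filter (fun k => Anc j k), q k with hx
  -- basic facts
  have F1 : ∀ (j : Fin n) (m : ℕ), dep (p^[m] j) ≤ dep j := by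
    intro j m
    induction m with
    | zero => exact le_rfl
    | succ m ih =>
        rw [Function.iterate_succ_apply']
        rcases eq_or_ne (p (p^[m] j)) (p^[m] j) with h | h
        · rw [h]; exact ih
        · have := hdec _ h; omega
  have F2 : ∀ j k, Anc j k → dep j ≤ dep k := by
    rintro j k ⟨m, rfl⟩; exact F1 k m
  have F3 : ∀ k, Anc (rt k) k := by
    have : ∀ (N : ℕ) (k : Fin n), dep k ≤ N → Anc (rt k) k := by
      intro N
      induction N with
      | zero =>
          intro k h
          have hp : p k = k := by
            by_contra hc; have := hdec k hc; omega
          have : k = rt k := (hroot k).mp hp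
          exact ⟨0, this⟩
      | succ N ih =>
          intro k h
          by_cases hp : p k = k
          · exact ⟨0, (hroot k).mp hp⟩
          · have h2 : dep (p k) ≤ N := by have := hdec k hp; omega
            obtain ⟨m, hm⟩ := ih (p k) h2
            refine ⟨m + 1, ?_⟩
            rw [Function.iterate_succ_apply, hm]
            exact (hrteq k (p k) (hadj k hp).reachable).symm
    exact fun k => this (dep k) k le_rfl
  have F5 : ∀ j k, Anc j k → G.Reachable k j := by
    have : ∀ (m : ℕ) (k : Fin n), G.Reachable k (p^[m] k) := by
      intro m
      induction m with
      | zero => exact fun k => SimpleGraph.Reachable.refl k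
      | succ m ih =>
          intro k
          rw [Function.iterate_succ_apply']
          rcases eq_or_ne (p (p^[m] k)) (p^[m] k) with h | h
          · rw [h]; exact ih k
          · exact (ih k).trans (hadj _ h).reachable
    rintro j k ⟨m, rfl⟩; exact this m k
  have Pa : ∀ j c, p c = j → c ≠ j → ¬ Anc c j := by
    intro j c hc hcj hA
    have h1 : dep c ≤ dep j := F2 c j hA
    have h2 : dep (p c) < dep c := hdec c (by rw [hc]; exact fun e => hcj e.symm)
    rw [hc] at h2; omega
  have Pb : ∀ k j, Anc j k → k ≠ j →
      ∃! c, p c = j ∧ c ≠ j ∧ Anc c k := by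
    intro k j hA hkj
    obtain ⟨m0, hm0⟩ := hA
    have hPex : ∃ m, p^[m] k = j := ⟨m0, hm0⟩
    set m := Nat.find hPex with hmdef
    have hm : p^[m] k = j := Nat.find_spec hPex
    have hmne : m ≠ 0 := by
      intro h0
      rw [h0] at hm
      exact hkj hm
    set c := p^[m-1] k with hcdef
    have hpc : p c = j := by
      have h1 : p (p^[m-1] k) = p^[m-1+1] k := (Function.iterate_succ_apply' p (m-1) k).symm
      rw [hcdef, h1, show m - 1 + 1 = m by omega]
      exact hm
    have hcj : c ≠ j := by
      intro e
      have : p^[m-1] k = j := by rw [← e]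
      exact absurd this (Nat.find_min hPex (by omega))
    -- uniqueness helper
    have uniq : ∀ c1 c2 (a b : ℕ), a ≤ b → p^[a] k = c1 → p^[b] k = c2 →
        p c1 = j → c1 ≠ j → p c2 = j → c2 ≠ j → c1 = c2 := by
      intro c1 c2 a b hab ha hb h1 h1' h2 h2'
      have hba : p^[b-a] c1 = c2 := by
        rw [← ha, ← Function.iterate_add_apply]
        have : b - a + a = b := by omega
        rw [this]; exact hb
      rcases Nat.eq_zero_or_pos (b - a) with h0 | h0
      · rw [h0] at hba; exact hba
      · exfalso
        have : p^[b-a] c1 = p^[b-a-1] (p c1) := by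
          rw [← Function.iterate_succ_apply]
          congr 1; omega
        rw [this, h1] at hba
        have hd1 : dep c2 ≤ dep j := by rw [← hba]; exact F1 j _
        have hd2 : dep (p c2) < dep c2 := hdec c2 (by rw [h2]; exact fun e => h2' e.symm)
        rw [h2] at hd2; omega
    refine ⟨c, ⟨hpc, hcj, ⟨m-1, rfl⟩⟩, ?_⟩
    rintro c' ⟨h1, h2, ⟨a, ha⟩⟩
    rcases le_total a (m-1) with hle | hle
    · exact uniq c' c a (m-1) hle ha rfl h1 h2 hpc hcj
    · exact (uniq c c' (m-1) a hle rfl ha hpc hcj h1 h2).symm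
  -- pointwise decomposition
  have L1 : ∀ j k, chi (Anc j k) = chi (k = j) +
      ∑ c ∈ univ.filter (fun c => p c = j ∧ c ≠ j), chi (Anc c k) := by
    intro j k
    by_cases hk : k = j
    · subst hk
      rw [chi_pos (⟨0, rfl⟩ : Anc k k), chi_pos rfl]
      rw [Finset.sum_eq_zero, add_zero]
      intro c hc
      rw [mem_filter] at hc
      exact chi_neg (Pa k c hc.2.1 hc.2.2)
    · rw [chi_neg hk]
      by_cases hA : Anc j k
      · rw [chi_pos hA, zero_add]
        obtain ⟨c, hc, hcu⟩ := Pb k j hA hk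
        rw [Finset.sum_eq_single_of_mem c
          (by rw [mem_filter]; exact ⟨mem_univ _, hc.1, hc.2.1⟩)]
        · exact (chi_pos hc.2.2).symm
        · intro b hb hbc
          rw [mem_filter] at hb
          refine chi_neg (fun hAb => hbc ?_)
          exact hcu b ⟨hb.2.1, hb.2.2, hAb⟩
      · rw [chi_neg hA, zero_add]
        rw [Finset.sum_eq_zero]
        intro c hc
        rw [mem_filter] at hc
        refine chi_neg (fun hAc => hA ?_)
        obtain ⟨m, hm⟩ := hAc
        refine ⟨m + 1, ?_⟩
        rw [Function.iterate_succ_apply', hm, hc.2.1]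
  -- x recursion
  have chimul : ∀ (P : Prop) (a : Z2), (if P then a else 0) = chi P * a := by
    intro P a
    by_cases h : P
    · rw [if_pos h, chi_pos h, one_mul]
    · rw [if_neg h, chi_neg h, zero_mul]
  have hxsum : ∀ j, x j = ∑ k, chi (Anc j k) * q k := by
    intro j
    show ∑ k ∈ filter (fun k => Anc j k) univ, q k = _
    rw [Finset.sum_filter]
    exact Finset.sum_congr rfl (fun k _ => chimul _ _)
  have Hx : ∀ j, x j = q j +
      ∑ c ∈ univ.filter (fun c => p c = j ∧ c ≠ j), x c := by
    intro j
    rw [hxsum j]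
    have : ∀ k, chi (Anc j k) * q k = chi (k = j) * q k +
        ∑ c ∈ univ.filter (fun c => p c = j ∧ c ≠ j), chi (Anc c k) * q k := by
      intro k
      rw [L1 j k, add_mul, Finset.sum_mul]
    rw [Finset.sum_congr rfl (fun k _ => this k), Finset.sum_add_distrib]
    congr 1
    · rw [Finset.sum_eq_single_of_mem j (mem_univ j)]
      · rw [chi_pos rfl, one_mul]
      · intro b _ hb
        rw [chi_neg hb, zero_mul]
    · rw [Finset.sum_comm]
      exact Finset.sum_congr rfl (fun c _ => (hxsum c).symm)
  have Hroot : ∀ j, p j = j → x j = 0 := by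
    intro j hpj
    have hjrt : j = rt j := (hroot j).mp hpj
    have hfil : univ.filter (fun k => Anc j k) = univ.filter (fun k => G.Reachable k j) := by
      ext k
      simp only [mem_filter, mem_univ, true_and]
      constructor
      · intro h; exact F5 j k h
      · intro h
        have h1 : rt k = rt j := hrteq k j h
        have h2 := F3 k
        rw [h1, ← hjrt] at h2
        exact h2
    show ∑ k ∈ filter (fun k => Anc j k) univ, q k = 0
    rw [hfil]
    exact hq j
  have z2c : ∀ b c : Z2, 0 = b + c → c = b := by decide
  have z2b : ∀ a b c : Z2, a = b + c → a + c = b := by decide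
  refine ⟨p, dep, x, hadj, hdec, ?_⟩
  intro j
  by_cases hpj : p j = j
  · rw [if_pos hpj, zero_add]
    have h1 := Hx j
    rw [Hroot j hpj] at h1
    exact z2c _ _ h1
  · rw [if_neg hpj]
    exact z2b _ _ _ (Hx j)

private lemma eps_exists {n : ℕ} (p : Fin n → Fin n) (dep : Fin n → ℕ)
    (hdec : ∀ j, p j ≠ j → dep (p j) < dep j) (t : Fin n → Z2) :
    ∃ ε : Fin n → Z2, ∀ j, p j ≠ j → ε j = ε (p j) + t j := by
  classical
  set N : ℕ := (Finset.univ.sup dep) + 1 with hN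
  have hNlt : ∀ j, dep j < N := by
    intro j
    have := Finset.le_sup (f := dep) (Finset.mem_univ j)
    omega
  set t' : Fin n → Z2 := fun j => if p j = j then 0 else t j with ht'
  -- after dep j steps, iteration is fixed
  have C : ∀ (m : ℕ) (j : Fin n), dep j ≤ m → p (p^[m] j) = p^[m] j := by
    intro m
    induction m with
    | zero =>
        intro j h
        by_contra hc
        have := hdec j hc
        omega
    | succ m ih =>
        intro j h
        by_cases hp : p j = j
        · rw [iterate_fixed p j hp]
          exact hp
        · have h2 : dep (p j) ≤ m := by have := hdec j hp; omega
          rw [Function.iterate_succ_apply]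
          exact ih (p j) h2
  refine ⟨fun j => ∑ m ∈ Finset.range N, t' (p^[m] j), ?_⟩
  intro j hpj
  have key : ∀ m, p^[m] (p j) = p^[m+1] j := by
    intro m
    rw [Function.iterate_succ_apply]
  have h1 : ∑ m ∈ Finset.range N, t' (p^[m] (p j))
      = ∑ m ∈ Finset.range N, t' (p^[m+1] j) :=
    Finset.sum_congr rfl (fun m _ => by rw [key m])
  have h2 : ∑ m ∈ Finset.range (N+1), t' (p^[m] j)
      = (∑ m ∈ Finset.range N, t' (p^[m+1] j)) + t' (p^[0] j) :=
    Finset.sum_range_succ' _ _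
  have h3 : ∑ m ∈ Finset.range (N+1), t' (p^[m] j)
      = (∑ m ∈ Finset.range N, t' (p^[m] j)) + t' (p^[N] j) :=
    Finset.sum_range_succ _ _
  have h4 : t' (p^[N] j) = 0 := by
    rw [ht']
    simp only []
    rw [if_pos (C N j (le_of_lt (hNlt j)))]
  have h5 : t' (p^[0] j) = t j := by
    show t' j = t j
    rw [ht']
    simp only []
    rw [if_neg hpj]
  have z2solve : ∀ S A B tj : Z2, S = A + tj → S = B + 0 → B = A + tj := by decide
  show (∑ m ∈ Finset.range N, t' (p^[m] j)) = (∑ m ∈ Finset.range N, t' (p^[m] (p j))) + t j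
  rw [h1]
  have h2' : (∑ m ∈ Finset.range (N+1), t' (p^[m] j))
      = (∑ m ∈ Finset.range N, t' (p^[m+1] j)) + t j := by rw [h2, h5]
  have h3' : (∑ m ∈ Finset.range (N+1), t' (p^[m] j))
      = (∑ m ∈ Finset.range N, t' (p^[m] j)) + 0 := by rw [h3, h4]
  exact z2solve _ _ _ _ h2' h3' 

private lemma chi_eq_one (x : Z2) : chi (x = 1) = x := by
  rcases z2_cases x with h | h
  · subst h; exact chi_neg (by decide)
  · subst h; exact chi_pos rfl

private lemma pair_boundary {n : ℕ} {κ : Type*} [Fintype κ]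
    (p : Fin n → Fin n) (β : Fin n → Z2) (q : Fin n → Z2)
    (U W : Fin n → κ) (cu : κ → Fin n)
    (hU : ∀ j, p j ≠ j → cu (U j) = j)
    (hW : ∀ j, p j ≠ j → cu (W j) = p j)
    (hUW : ∀ j, p j ≠ j → U j ≠ W j)
    (hbd : ∀ j, (if p j = j then 0 else β j) +
        ∑ j' ∈ univ.filter (fun j' => p j' = j ∧ j' ≠ j), β j' = q j) :
    ∀ j, (∑ a : κ, chi (cu a = j) * (∑ b : κ,
      (∑ j' : Fin n, chi (p j' ≠ j' ∧ β j' = 1 ∧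
        ((a = U j' ∧ b = W j') ∨ (a = W j' ∧ b = U j')))))) = q j := by
  intro j
  have hswap : (∑ a : κ, chi (cu a = j) * (∑ b : κ, (∑ j' : Fin n, chi (p j' ≠ j' ∧ β j' = 1 ∧
        ((a = U j' ∧ b = W j') ∨ (a = W j' ∧ b = U j'))))))
      = ∑ j' : Fin n, ∑ a : κ, ∑ b : κ, chi (cu a = j) * chi (p j' ≠ j' ∧ β j' = 1 ∧
        ((a = U j' ∧ b = W j') ∨ (a = W j' ∧ b = U j'))) := by
    rw [Finset.sum_comm]
    refine Finset.sum_congr rfl (fun a _ => ?_)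
    rw [Finset.mul_sum]
    rw [Finset.sum_comm]
    exact Finset.sum_congr rfl (fun b _ => Finset.mul_sum _ _ _)
  rw [hswap]
  have hinner : ∀ j', (∑ a : κ, ∑ b : κ, chi (cu a = j) * chi (p j' ≠ j' ∧ β j' = 1 ∧
        ((a = U j' ∧ b = W j') ∨ (a = W j' ∧ b = U j'))))
      = chi (p j' ≠ j' ∧ β j' = 1) * (chi (j' = j) + chi (p j' = j)) := by
    intro j'
    by_cases hP : p j' ≠ j' ∧ β j' = 1
    · have hne := hUW j' hP.1
      have hpt : ∀ a b : κ, chi (p j' ≠ j' ∧ β j' = 1 ∧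
            ((a = U j' ∧ b = W j') ∨ (a = W j' ∧ b = U j')))
          = chi (a = U j' ∧ b = W j') + chi (a = W j' ∧ b = U j') := by
        intro a b
        rw [chi_congr (show (p j' ≠ j' ∧ β j' = 1 ∧ ((a = U j' ∧ b = W j') ∨ (a = W j' ∧ b = U j')))
          ↔ ((a = U j' ∧ b = W j') ∨ (a = W j' ∧ b = U j')) from
          ⟨fun h => h.2.2, fun h => ⟨hP.1, hP.2, h⟩⟩)]
        refine chi_or_disjoint ?_
        rintro ⟨⟨h1, h2⟩, ⟨h3, h4⟩⟩
        exact hne (h1 ▸ h3.symm ▸ rfl)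
      have h1 : (∑ a : κ, ∑ b : κ, chi (cu a = j) * (chi (a = U j' ∧ b = W j')
            + chi (a = W j' ∧ b = U j')))
          = chi (cu (U j') = j) + chi (cu (W j') = j) := by
        have hab : ∀ (X Y : κ), X ≠ Y → (∑ a : κ, ∑ b : κ, chi (cu a = j) * chi (a = X ∧ b = Y))
            = chi (cu X = j) := by
          intro X Y _
          have : ∀ a : κ, (∑ b : κ, chi (cu a = j) * chi (a = X ∧ b = Y))
              = chi (cu a = j) * chi (a = X) := by
            intro a
            have : ∀ b : κ, chi (cu a = j) * chi (a = X ∧ b = Y)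
                = (chi (cu a = j) * chi (a = X)) * chi (b = Y) := by
              intro b
              rw [chi_and]
              ring
            rw [Finset.sum_congr rfl (fun b _ => this b), ← Finset.mul_sum, sum_chi_eq, mul_one]
          rw [Finset.sum_congr rfl (fun a _ => this a)]
          rw [Finset.sum_eq_single_of_mem X (mem_univ X)]
          · rw [chi_pos rfl, mul_one]
          · intro b _ hb
            rw [chi_neg hb, mul_zero]
        have hsplit : (∑ a : κ, ∑ b : κ, chi (cu a = j) * (chi (a = U j' ∧ b = W j')
              + chi (a = W j' ∧ b = U j')))
            = (∑ a : κ, ∑ b : κ, chi (cu a = j) * chi (a = U j' ∧ b = W j'))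
              + (∑ a : κ, ∑ b : κ, chi (cu a = j) * chi (a = W j' ∧ b = U j')) := by
          rw [← Finset.sum_add_distrib]
          refine Finset.sum_congr rfl (fun a _ => ?_)
          rw [← Finset.sum_add_distrib]
          refine Finset.sum_congr rfl (fun b _ => ?_)
          ring
        rw [hsplit, hab (U j') (W j') hne, hab (W j') (U j') hne.symm]
      rw [Finset.sum_congr rfl (fun a _ => Finset.sum_congr rfl (fun b _ => by rw [hpt a b])),
        h1, hU j' hP.1, hW j' hP.1, chi_pos hP, one_mul]
    · rw [chi_neg hP, zero_mul]
      refine Finset.sum_eq_zero (fun a _ => Finset.sum_eq_zero (fun b _ => ?_))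
      rw [show chi (p j' ≠ j' ∧ β j' = 1 ∧ ((a = U j' ∧ b = W j') ∨ (a = W j' ∧ b = U j'))) = 0
        from chi_neg (fun h => hP ⟨h.1, h.2.1⟩), mul_zero]
  rw [Finset.sum_congr rfl (fun j' _ => hinner j')]
  have hsplit2 : (∑ j' : Fin n, chi (p j' ≠ j' ∧ β j' = 1) * (chi (j' = j) + chi (p j' = j)))
      = (∑ j' : Fin n, chi (p j' ≠ j' ∧ β j' = 1) * chi (j' = j))
        + (∑ j' : Fin n, chi (p j' ≠ j' ∧ β j' = 1) * chi (p j' = j)) := by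
    rw [← Finset.sum_add_distrib]
    exact Finset.sum_congr rfl (fun j' _ => by ring)
  rw [hsplit2]
  have hfirst : (∑ j' : Fin n, chi (p j' ≠ j' ∧ β j' = 1) * chi (j' = j))
      = (if p j = j then 0 else β j) := by
    rw [Finset.sum_eq_single_of_mem j (mem_univ j)]
    · rw [chi_pos rfl, mul_one]
      by_cases hpj : p j = j
      · rw [if_pos hpj, chi_neg (fun h => h.1 hpj)]
      · rw [if_neg hpj, chi_congr (show (p j ≠ j ∧ β j = 1) ↔ (β j = 1) from
          ⟨fun h => h.2, fun h => ⟨hpj, h⟩⟩), chi_eq_one]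
    · intro b _ hb
      rw [chi_neg hb, mul_zero]
  have hsecond : (∑ j' : Fin n, chi (p j' ≠ j' ∧ β j' = 1) * chi (p j' = j))
      = ∑ j' ∈ univ.filter (fun j' => p j' = j ∧ j' ≠ j), β j' := by
    rw [Finset.sum_filter]
    refine Finset.sum_congr rfl (fun j' _ => ?_)
    by_cases hpj : p j' = j
    · rw [chi_pos hpj, mul_one]
      by_cases hjj : j' = j
      · rw [if_neg (fun h => h.2 hjj)]
        exact chi_neg (fun h => h.1 (by rw [hpj, hjj]))
      · rw [if_pos ⟨hpj, hjj⟩]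
        rw [chi_congr (show (p j' ≠ j' ∧ β j' = 1) ↔ (β j' = 1) from
          ⟨fun h => h.2, fun h => ⟨fun e => hjj (by rw [← hpj, e]), h⟩⟩), chi_eq_one]
    · rw [chi_neg hpj, mul_zero, if_neg (fun h => hpj h.1)]
  rw [hfirst, hsecond]
  exact hbd j

private lemma z2_fin2 : ∀ A B C D E F G H I L c1 c2 : Z2,
    B + C = L → H + I = D + E → (A + L) + (F + D) + (G + E) = 0 →
    ((A + (C + c1 * (F + H) + c2 * (G + I))) + B) + (1 + c1) * (F + H)
      + (1 + c2) * (G + I) = 0 := by decide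

end

/-! A 3-row graph with `s` columns is a simple graph on `Fin 3 × Fin s`
(vertex `(i, j)` lies in row `i` and column `j`) whose columns are independent. -/

/-- Every column is an independent set. -/
def ColIndep {s : ℕ} (R : SimpleGraph (Fin 3 × Fin s)) : Prop :=
  ∀ i i' j, ¬ R.Adj (i, j) (i', j)

/-- `d_c(v, R)`: the number of edges of color `c` (under the edge coloring `g`)
incident with `v`. -/
noncomputable def dColor {s : ℕ} (R : SimpleGraph (Fin 3 × Fin s))
    (g : Sym2 (Fin 3 × Fin s) → Fin 3) (c : Fin 3) (v : Fin 3 × Fin s) : ℕ :=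
  {w | R.Adj v w ∧ g s(v, w) = c}.ncard

/-- An amiable coloring of a 3-row graph: a vertex 3-coloring `f` and an edge
3-coloring `g` such that (i) `f` is injective on every column, (ii) no edge has
the color of one of its endpoints, (iii) for every color `c` and column `j`,
`d_c(v₀ⱼ) + d_c(v₁ⱼ) + d_c(v₂ⱼ)` is even. -/
def Amiable {s : ℕ} (R : SimpleGraph (Fin 3 × Fin s))
    (f : Fin 3 × Fin s → Fin 3) (g : Sym2 (Fin 3 × Fin s) → Fin 3) : Prop :=
  (∀ j, Function.Injective (fun i : Fin 3 => f (i, j))) ∧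
  (∀ v w, R.Adj v w → f v ≠ g s(v, w)) ∧
  (∀ c : Fin 3, ∀ j,
    Even (dColor R g c (0, j) + dColor R g c (1, j) + dColor R g c (2, j)))

/-- `R_C` (the multigraph obtained by identifying each column to one vertex) is
eulerian: the degree of each column, i.e. the sum of the degrees of its three
vertices (columns being independent), is even. -/
def EulerianRC {s : ℕ} (R : SimpleGraph (Fin 3 × Fin s)) : Prop :=
  ∀ j, Even ((R.neighborSet (0, j)).ncard + (R.neighborSet (1, j)).ncard +
    (R.neighborSet (2, j)).ncard)

/-- The `i`-th row. -/
def rowSet (s : ℕ) (i : Fin 3) : Set (Fin 3 × Fin s) := {v | v.1 = i}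

section MainProof
open Finset
open scoped Classical

private def oth : Fin 3 → Fin 3 := fun a => if a = 1 then 2 else if a = 2 then 1 else 0

theorem stmt8 {s : ℕ} (R : SimpleGraph (Fin 3 × Fin s))
    (hcol : ColIndep R) (heul : EulerianRC R)
    (hconn : (R.induce (rowSet s 0)).Connected) :
    ∃ (f : Fin 3 × Fin s → Fin 3) (g : Sym2 (Fin 3 × Fin s) → Fin 3),
      Amiable R f g := by
  classical
  have hfin3 : ∀ i : Fin 3, i = 0 ∨ i = 1 ∨ i = 2 := by decide
  -- column graphs
  set G0 : SimpleGraph (Fin s) := SimpleGraph.fromRel (fun a b => R.Adj (0, a) (0, b)) with hG0def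
  have hG0 : ∀ a b, G0.Adj a b ↔ R.Adj (0, a) (0, b) := by
    intro a b
    rw [hG0def]
    constructor
    · rintro ⟨hne, h | h⟩
      · exact h
      · exact h.symm
    · intro h
      exact ⟨fun hab => R.irrefl (hab ▸ h), Or.inl h⟩
  set Glow : SimpleGraph (Fin s) := SimpleGraph.fromRel (fun a b =>
    ∃ u w : Fin 3 × Fin s, u.2 = a ∧ w.2 = b ∧ u.1 ≠ 0 ∧ w.1 ≠ 0 ∧ R.Adj u w) with hGLdef
  have hGLadj : ∀ u w : Fin 3 × Fin s, R.Adj u w → u.1 ≠ 0 → w.1 ≠ 0 → Glow.Adj u.2 w.2 := by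
    intro u w hadj hu hw
    rw [hGLdef]
    refine ⟨?_, Or.inl ⟨u, w, rfl, rfl, hu, hw, hadj⟩⟩
    intro hc
    have hw2 : w = (w.1, u.2) := Prod.ext rfl hc.symm
    rw [hw2] at hadj
    exact hcol u.1 w.1 u.2 hadj
  have hGL : ∀ a b, Glow.Adj a b →
      ∃ u w : Fin 3 × Fin s, u.2 = a ∧ w.2 = b ∧ u.1 ≠ 0 ∧ w.1 ≠ 0 ∧ R.Adj u w := by
    intro a b hab
    rw [hGLdef] at hab
    obtain ⟨hne, h | h⟩ := hab
    · exact h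
    · obtain ⟨u, w, h1, h2, h3, h4, h5⟩ := h
      exact ⟨w, u, h2, h1, h4, h3, h5.symm⟩
  -- connectivity of G0
  have hG0conn : ∀ a b, G0.Reachable a b := by
    intro a b
    have hmem : ∀ c : Fin s, ((0 : Fin 3), c) ∈ rowSet s 0 := fun c => rfl
    let φ : (R.induce (rowSet s 0)) →g G0 := by
      refine ⟨fun v => (v : Fin 3 × Fin s).2, ?_⟩
      intro v w hvw
      have hadj : R.Adj v w := hvw
      have hv0 : (v : Fin 3 × Fin s).1 = 0 := v.2
      have hw0 : (w : Fin 3 × Fin s).1 = 0 := w.2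
      rw [hG0]
      have hv : (v : Fin 3 × Fin s) = (0, (v : Fin 3 × Fin s).2) := Prod.ext hv0 rfl
      have hw : (w : Fin 3 × Fin s) = (0, (w : Fin 3 × Fin s).2) := Prod.ext hw0 rfl
      rw [hv, hw] at hadj
      exact hadj
    have h := hconn.preconnected ⟨(0, a), hmem a⟩ ⟨(0, b), hmem b⟩
    exact h.map φ
  -- Eulerian hypothesis in ZMod 2
  have heulZ : ∀ j, (∑ w, chi (R.Adj (0, j) w)) + (∑ w, chi (R.Adj (1, j) w))
      + (∑ w, chi (R.Adj (2, j) w)) = 0 := by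
    intro j
    have h := heul j
    rw [even_iff_z2] at h
    push_cast at h
    have h1 : (((R.neighborSet (0, j)).ncard : ℕ) : Z2) = ∑ w, chi (R.Adj (0, j) w) :=
      ncard_to_sum _
    have h2 : (((R.neighborSet (1, j)).ncard : ℕ) : Z2) = ∑ w, chi (R.Adj (1, j) w) :=
      ncard_to_sum _
    have h3 : (((R.neighborSet (2, j)).ncard : ℕ) : Z2) = ∑ w, chi (R.Adj (2, j) w) :=
      ncard_to_sum _
    rw [h1, h2, h3] at h
    exact h
  -- lower degree function
  set qL : Fin s → Z2 := fun j => (∑ w, chi (R.Adj (1, j) w ∧ w.1 ≠ 0))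
      + (∑ w, chi (R.Adj (2, j) w ∧ w.1 ≠ 0)) with hqLdef
  have hqLval : ∀ j, qL j = (∑ w, chi (R.Adj (1, j) w ∧ w.1 ≠ 0))
      + (∑ w, chi (R.Adj (2, j) w ∧ w.1 ≠ 0)) := fun _ => rfl
  have hqLcomp : ∀ j0, (∑ k ∈ univ.filter (fun k => Glow.Reachable k j0), qL k) = 0 := by
    intro j0
    set M : (Fin 3 × Fin s) → (Fin 3 × Fin s) → Z2 := fun v w =>
      chi (R.Adj v w ∧ v.1 ≠ 0 ∧ w.1 ≠ 0 ∧ Glow.Reachable v.2 j0 ∧ Glow.Reachable w.2 j0)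
      with hMdef
    have hMval : ∀ v w, M v w = chi (R.Adj v w ∧ v.1 ≠ 0 ∧ w.1 ≠ 0 ∧ Glow.Reachable v.2 j0
        ∧ Glow.Reachable w.2 j0) := fun _ _ => rfl
    have hM : ∑ v, ∑ w, M v w = 0 := by
      refine symsum M ?_ ?_
      · intro a b
        rw [hMval, hMval]
        exact chi_congr ⟨fun h => ⟨h.1.symm, h.2.2.1, h.2.1, h.2.2.2.2, h.2.2.2.1⟩,
          fun h => ⟨h.1.symm, h.2.2.1, h.2.1, h.2.2.2.2, h.2.2.2.1⟩⟩
      · intro a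
        rw [hMval]
        exact chi_neg (fun h => R.irrefl h.1)
    rw [Fintype.sum_prod_type, Fin.sum_univ_three] at hM
    have h0 : ∑ k : Fin s, ∑ w, M (0, k) w = 0 := by
      refine Finset.sum_eq_zero (fun k _ => Finset.sum_eq_zero (fun w _ => ?_))
      rw [hMval]
      exact chi_neg (fun h => h.2.1 rfl)
    rw [h0, zero_add, ← Finset.sum_add_distrib] at hM
    rw [Finset.sum_filter]
    have hgoal : (∑ k, if Glow.Reachable k j0 then qL k else 0)
        = ∑ k : Fin s, ((∑ w, M (1, k) w) + (∑ w, M (2, k) w)) := by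
      refine Finset.sum_congr rfl (fun k _ => ?_)
      by_cases hr : Glow.Reachable k j0
      · rw [if_pos hr, hqLval]
        have hpt : ∀ (i : Fin 3) w, i ≠ 0 → (chi (R.Adj (i, k) w ∧ w.1 ≠ 0) = M (i, k) w) := by
          intro i w hi
          rw [hMval]
          refine chi_congr ⟨fun h => ⟨h.1, hi, h.2, hr, ?_⟩, fun h => ⟨h.1, h.2.2.1⟩⟩
          exact ((hGLadj (i, k) w h.1 hi h.2).symm.reachable).trans hr
        rw [Finset.sum_congr rfl (fun w _ => hpt 1 w (by decide)),
            Finset.sum_congr rfl (fun w _ => hpt 2 w (by decide))]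
      · rw [if_neg hr]
        have hz : ∀ i : Fin 3, ∑ w, M (i, k) w = 0 := by
          intro i
          refine Finset.sum_eq_zero (fun w _ => ?_)
          rw [hMval]
          exact chi_neg (fun h => hr h.2.2.2.1)
        rw [hz 1, hz 2, add_zero]
    convert hgoal.trans hM
  obtain ⟨pL, depL, βL, hLadj, hLdec, hLbd⟩ := realize_boundary Glow qL (by convert hqLcomp)
  -- choose representative lower edges for the forest
  have hselex : ∀ j, ∃ uv : (Fin 3 × Fin s) × (Fin 3 × Fin s),
      pL j ≠ j → (uv.1.2 = j ∧ uv.2.2 = pL j ∧ uv.1.1 ≠ 0 ∧ uv.2.1 ≠ 0 ∧ R.Adj uv.1 uv.2) := by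
    intro j
    by_cases h : pL j = j
    · exact ⟨((0, j), (0, j)), fun hc => absurd h hc⟩
    · obtain ⟨u, w, h1, h2, h3, h4, h5⟩ := hGL j (pL j) (hLadj j h)
      exact ⟨(u, w), fun _ => ⟨h1, h2, h3, h4, h5⟩⟩
  choose sel hsel using hselex
  set tL : Fin s → Z2 := fun j => chi ((sel j).1.1 = 2) + chi ((sel j).2.1 = 2) with htLdef
  have htLval : ∀ j, tL j = chi ((sel j).1.1 = 2) + chi ((sel j).2.1 = 2) := fun _ => rfl
  obtain ⟨ε, hε⟩ := eps_exists pL depL hLdec tL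
  -- vertex coloring
  set et : Fin 3 × Fin s → Z2 := fun v => ε v.2 + chi (v.1 = 2) with hetdef
  have hetval : ∀ v : Fin 3 × Fin s, et v = ε v.2 + chi (v.1 = 2) := fun _ => rfl
  set f : Fin 3 × Fin s → Fin 3 := fun v => if v.1 = 0 then 0 else if et v = 0 then 1 else 2
    with hfdef
  have hfval : ∀ v : Fin 3 × Fin s, f v = if v.1 = 0 then 0 else if et v = 0 then 1 else 2 :=
    fun _ => rfl
  have hf0 : ∀ v : Fin 3 × Fin s, v.1 = 0 → f v = 0 := by
    intro v hv; rw [hfval, if_pos hv]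
  have hfL : ∀ v : Fin 3 × Fin s, v.1 ≠ 0 → f v = 1 ∨ f v = 2 := by
    intro v hv; rw [hfval, if_neg hv]
    by_cases h : et v = 0
    · left; rw [if_pos h]
    · right; rw [if_neg h]
  have hfne0 : ∀ v : Fin 3 × Fin s, v.1 ≠ 0 → f v ≠ 0 := by
    intro v hv
    rcases hfL v hv with h | h <;> rw [h] <;> decide
  have hf1iff : ∀ v : Fin 3 × Fin s, v.1 ≠ 0 → (f v = 1 ↔ et v = 0) := by
    intro v hv; rw [hfval, if_neg hv]
    by_cases h : et v = 0
    · rw [if_pos h]; simp [h]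
    · rw [if_neg h]; constructor
      · intro hc; exact absurd hc (by decide)
      · intro hc; exact absurd hc h
  have hf2iff : ∀ v : Fin 3 × Fin s, v.1 ≠ 0 → (f v = 2 ↔ et v ≠ 0) := by
    intro v hv
    rcases hfL v hv with h | h
    · rw [h]
      constructor
      · intro hc; exact absurd hc (by decide)
      · intro hc; exact absurd ((hf1iff v hv).mp h) hc
    · rw [h]
      have := (hf1iff v hv)
      rw [h] at this
      constructor
      · intro _
        intro hc
        exact absurd (this.mpr hc) (by decide)
      · intro _; rfl
  have hfeq : ∀ u w : Fin 3 × Fin s, u.1 ≠ 0 → w.1 ≠ 0 → (f u = f w ↔ et u = et w) := by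
    intro u w hu hw
    constructor
    · intro h
      rcases z2_cases (et u) with h1 | h1 <;> rcases z2_cases (et w) with h2 | h2
      · rw [h1, h2]
      · exfalso
        have hu1 : f u = 1 := (hf1iff u hu).mpr h1
        have hw2 : f w = 2 := (hf2iff w hw).mpr (by rw [h2]; decide)
        rw [hu1, hw2] at h; exact absurd h (by decide)
      · exfalso
        have hw1 : f w = 1 := (hf1iff w hw).mpr h2
        have hu2 : f u = 2 := (hf2iff u hu).mpr (by rw [h1]; decide)
        rw [hu2, hw1] at h; exact absurd h (by decide)
      · rw [h1, h2]
    · intro h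
      rcases z2_cases (et u) with h1 | h1
      · rw [(hf1iff u hu).mpr h1, (hf1iff w hw).mpr (by rw [← h]; exact h1)]
      · rw [(hf2iff u hu).mpr (by rw [h1]; decide),
          (hf2iff w hw).mpr (by rw [← h, h1]; decide)]
  -- the selected edges are f-monochromatic
  have hfsel : ∀ j, pL j ≠ j → f (sel j).1 = f (sel j).2 := by
    intro j hj
    obtain ⟨hs1, hs2, hs3, hs4, hs5⟩ := hsel j hj
    rw [hfeq _ _ hs3 hs4, hetval, hetval, hs1, hs2, hε j hj, htLval]
    have : ∀ a b c : Z2, a + (b + c) + b = a + c := by decide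
    exact this _ _ _
  -- the matching matrix on lower vertices
  set dm : (Fin 3 × Fin s) → (Fin 3 × Fin s) → Z2 := fun a b =>
    ∑ j : Fin s, chi (pL j ≠ j ∧ βL j = 1 ∧
      ((a = (sel j).1 ∧ b = (sel j).2) ∨ (a = (sel j).2 ∧ b = (sel j).1))) with hdmdef
  have hdmval : ∀ a b, dm a b = ∑ j : Fin s, chi (pL j ≠ j ∧ βL j = 1 ∧
      ((a = (sel j).1 ∧ b = (sel j).2) ∨ (a = (sel j).2 ∧ b = (sel j).1))) := fun _ _ => rfl
  have hdmsym : ∀ a b, dm a b = dm b a := by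
    intro a b
    rw [hdmval, hdmval]
    refine Finset.sum_congr rfl (fun j _ => chi_congr ?_)
    constructor
    · rintro ⟨h1, h2, h3 | h3⟩
      · exact ⟨h1, h2, Or.inr ⟨h3.2, h3.1⟩⟩
      · exact ⟨h1, h2, Or.inl ⟨h3.2, h3.1⟩⟩
    · rintro ⟨h1, h2, h3 | h3⟩
      · exact ⟨h1, h2, Or.inr ⟨h3.2, h3.1⟩⟩
      · exact ⟨h1, h2, Or.inl ⟨h3.2, h3.1⟩⟩
  have hdmsupp : ∀ a b, dm a b ≠ 0 →
      R.Adj a b ∧ a.1 ≠ 0 ∧ b.1 ≠ 0 ∧ f a = f b := by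
    intro a b h
    rw [hdmval] at h
    obtain ⟨j, _, hj⟩ := Finset.exists_ne_zero_of_sum_ne_zero h
    have hprop : pL j ≠ j ∧ βL j = 1 ∧
        ((a = (sel j).1 ∧ b = (sel j).2) ∨ (a = (sel j).2 ∧ b = (sel j).1)) := by
      by_contra hc
      exact hj (chi_neg hc)
    obtain ⟨h1, _, h3⟩ := hprop
    obtain ⟨hs1, hs2, hs3, hs4, hs5⟩ := hsel j h1
    rcases h3 with ⟨ha, hb⟩ | ⟨ha, hb⟩
    · subst ha; subst hb
      exact ⟨hs5, hs3, hs4, hfsel j h1⟩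
    · subst ha; subst hb
      exact ⟨hs5.symm, hs4, hs3, (hfsel j h1).symm⟩
  set Dv : Fin 3 × Fin s → Z2 := fun v => ∑ w, dm v w with hDvdef
  have hDvval : ∀ v, Dv v = ∑ w, dm v w := fun _ => rfl
  -- boundary property of dm
  have hddeg : ∀ j, Dv (1, j) + Dv (2, j) = qL j := by
    intro j
    have hpb := pair_boundary pL βL qL (fun j => (sel j).1) (fun j => (sel j).2)
      (fun v => v.2) (fun j hj => (hsel j hj).1) (fun j hj => (hsel j hj).2.1)
      (fun j hj => (hsel j hj).2.2.2.2.ne) hLbd j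
    have hexp : (∑ a : Fin 3 × Fin s, chi (a.2 = j) * (∑ b, dm a b)) = qL j := by
      have hconv : (∑ a : Fin 3 × Fin s, chi (a.2 = j) * (∑ b, dm a b))
          = (∑ a : Fin 3 × Fin s, chi (a.2 = j) * (∑ b, ∑ j' : Fin s,
            chi (pL j' ≠ j' ∧ βL j' = 1 ∧
            ((a = (sel j').1 ∧ b = (sel j').2) ∨ (a = (sel j').2 ∧ b = (sel j').1))))) := by
        simp only [hdmval]
      rw [hconv]
      exact hpb
    have hsimp : (∑ a : Fin 3 × Fin s, chi (a.2 = j) * (∑ b, dm a b))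
        = Dv (0, j) + (Dv (1, j) + Dv (2, j)) := by
      rw [Fintype.sum_prod_type, Fin.sum_univ_three]
      have hone : ∀ i : Fin 3, (∑ k : Fin s, chi (((i, k) : Fin 3 × Fin s).2 = j)
          * (∑ b, dm (i, k) b)) = Dv (i, j) := by
        intro i
        rw [Finset.sum_eq_single_of_mem j (mem_univ j)]
        · rw [chi_pos rfl, one_mul, hDvval]
        · intro b _ hb
          rw [chi_neg hb, zero_mul]
      rw [hone 0, hone 1, hone 2, add_assoc]
    have hD0 : Dv (0, j) = 0 := by
      rw [hDvval]
      refine Finset.sum_eq_zero (fun w _ => ?_)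
      by_contra hc
      exact (hdmsupp _ _ hc).2.1 rfl
    rw [hsimp, hD0, zero_add] at hexp
    exact hexp
  -- the color-1 demand function r
  set e0up : Fin 3 × Fin s → Z2 := fun v => ∑ w, chi (R.Adj v w ∧ w.1 = 0) with he0updef
  have he0upval : ∀ v, e0up v = ∑ w, chi (R.Adj v w ∧ w.1 = 0) := fun _ => rfl
  set r : Fin s → Z2 := fun j => (∑ w, chi (R.Adj (0, j) w ∧ w.1 ≠ 0 ∧ f w = 2))
      + (chi (f (1, j) = 2) * (e0up (1, j) + Dv (1, j)))
      + (chi (f (2, j) = 2) * (e0up (2, j) + Dv (2, j))) with hrdef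
  have hrval : ∀ j, r j = (∑ w, chi (R.Adj (0, j) w ∧ w.1 ≠ 0 ∧ f w = 2))
      + (chi (f (1, j) = 2) * (e0up (1, j) + Dv (1, j)))
      + (chi (f (2, j) = 2) * (e0up (2, j) + Dv (2, j))) := fun _ => rfl
  have hrsum : (∑ j, r j) = 0 := by
    set N : (Fin 3 × Fin s) → (Fin 3 × Fin s) → Z2 := fun v w =>
      chi (v.1 = 0 ∧ w.1 ≠ 0 ∧ R.Adj v w ∧ f w = 2)
      + chi (v.1 ≠ 0 ∧ w.1 = 0 ∧ R.Adj v w ∧ f v = 2)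
      + chi (f v = 2) * dm v w with hNdef
    have hNval : ∀ v w, N v w = chi (v.1 = 0 ∧ w.1 ≠ 0 ∧ R.Adj v w ∧ f w = 2)
      + chi (v.1 ≠ 0 ∧ w.1 = 0 ∧ R.Adj v w ∧ f v = 2)
      + chi (f v = 2) * dm v w := fun _ _ => rfl
    have hN : ∑ v, ∑ w, N v w = 0 := by
      refine symsum N ?_ ?_
      · intro a b
        rw [hNval, hNval]
        have h1 : chi (a.1 = 0 ∧ b.1 ≠ 0 ∧ R.Adj a b ∧ f b = 2)
            = chi (b.1 ≠ 0 ∧ a.1 = 0 ∧ R.Adj b a ∧ f b = 2) :=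
          chi_congr ⟨fun h => ⟨h.2.1, h.1, h.2.2.1.symm, h.2.2.2⟩,
            fun h => ⟨h.2.1, h.1, h.2.2.1.symm, h.2.2.2⟩⟩
        have h2 : chi (a.1 ≠ 0 ∧ b.1 = 0 ∧ R.Adj a b ∧ f a = 2)
            = chi (b.1 = 0 ∧ a.1 ≠ 0 ∧ R.Adj b a ∧ f a = 2) :=
          chi_congr ⟨fun h => ⟨h.2.1, h.1, h.2.2.1.symm, h.2.2.2⟩,
            fun h => ⟨h.2.1, h.1, h.2.2.1.symm, h.2.2.2⟩⟩
        have h3 : chi (f a = 2) * dm a b = chi (f b = 2) * dm b a := by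
          by_cases hd : dm a b = 0
          · rw [hd, ← hdmsym a b, hd, mul_zero, mul_zero]
          · rw [(hdmsupp a b hd).2.2.2, hdmsym a b]
        rw [h1, h2, h3]
        ring
      · intro a
        rw [hNval]
        have hd : dm a a = 0 := by
          by_contra hc
          exact R.irrefl (hdmsupp a a hc).1
        rw [chi_neg (fun h => h.2.1 h.1), chi_neg (fun h => h.1 h.2.1), hd, mul_zero]
        ring
    rw [Fintype.sum_prod_type, Fin.sum_univ_three] at hN
    have hrow0 : ∀ k, (∑ w, N (0, k) w) = ∑ w, chi (R.Adj (0, k) w ∧ w.1 ≠ 0 ∧ f w = 2) := by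
      intro k
      refine Finset.sum_congr rfl (fun w _ => ?_)
      rw [hNval]
      have hc1 : chi (((0 : Fin 3), k).1 = 0 ∧ w.1 ≠ 0 ∧ R.Adj (0, k) w ∧ f w = 2)
          = chi (R.Adj (0, k) w ∧ w.1 ≠ 0 ∧ f w = 2) :=
        chi_congr ⟨fun h => ⟨h.2.2.1, h.2.1, h.2.2.2⟩, fun h => ⟨rfl, h.2.1, h.1, h.2.2⟩⟩
      have hc2 : chi (((0 : Fin 3), k).1 ≠ 0 ∧ w.1 = 0 ∧ R.Adj (0, k) w ∧ f (0, k) = 2) = 0 :=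
        chi_neg (fun h => h.1 rfl)
      have hc3 : chi (f ((0 : Fin 3), k) = 2) = 0 := by
        refine chi_neg (fun h => ?_)
        rw [hf0 _ rfl] at h
        exact absurd h (by decide)
      rw [hc1, hc2, hc3, zero_mul, add_zero, add_zero]
    have hrowi : ∀ (i : Fin 3) k, i ≠ 0 →
        (∑ w, N (i, k) w) = chi (f (i, k) = 2) * (e0up (i, k) + Dv (i, k)) := by
      intro i k hi
      have hpt : ∀ w, N (i, k) w = chi (f (i, k) = 2) * chi (R.Adj (i, k) w ∧ w.1 = 0)
          + chi (f (i, k) = 2) * dm (i, k) w := by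
        intro w
        rw [hNval]
        have hc1 : chi (((i : Fin 3), k).1 = 0 ∧ w.1 ≠ 0 ∧ R.Adj (i, k) w ∧ f w = 2) = 0 :=
          chi_neg (fun h => hi h.1)
        have hc2 : chi (((i : Fin 3), k).1 ≠ 0 ∧ w.1 = 0 ∧ R.Adj (i, k) w ∧ f (i, k) = 2)
            = chi (f (i, k) = 2) * chi (R.Adj (i, k) w ∧ w.1 = 0) := by
          rw [← chi_and]
          exact chi_congr ⟨fun h => ⟨h.2.2.2, h.2.2.1, h.2.1⟩,
            fun h => ⟨hi, h.2.2, h.2.1, h.1⟩⟩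
        rw [hc1, hc2, zero_add]
      rw [Finset.sum_congr rfl (fun w _ => hpt w), Finset.sum_add_distrib,
        ← Finset.mul_sum, ← Finset.mul_sum, ← he0upval, ← hDvval, mul_add]
    simp only [hrow0] at hN
    rw [Finset.sum_congr rfl (fun k _ => hrowi 1 k (by decide)),
        Finset.sum_congr rfl (fun k _ => hrowi 2 k (by decide))] at hN
    rw [← Finset.sum_add_distrib, ← Finset.sum_add_distrib] at hN
    rw [← hN]
    all_goals exact Finset.sum_congr rfl (fun j _ => hrval j)
  have hrcomp : ∀ j0, (∑ k ∈ univ.filter (fun k => G0.Reachable k j0), r k) = 0 := by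
    intro j0
    rw [Finset.filter_true_of_mem (fun k _ => hG0conn k j0)]
    exact hrsum
  obtain ⟨p0, dep0, β0, h0adj, h0dec, h0bd⟩ := realize_boundary G0 r (by convert hrcomp)
  set s1 : Fin s → Fin s → Z2 := fun a b => ∑ j : Fin s, chi (p0 j ≠ j ∧ β0 j = 1 ∧
      ((a = j ∧ b = p0 j) ∨ (a = p0 j ∧ b = j))) with hs1def
  have hs1val : ∀ a b, s1 a b = ∑ j : Fin s, chi (p0 j ≠ j ∧ β0 j = 1 ∧
      ((a = j ∧ b = p0 j) ∨ (a = p0 j ∧ b = j))) := fun _ _ => rfl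
  have hs1sym : ∀ a b, s1 a b = s1 b a := by
    intro a b
    rw [hs1val, hs1val]
    refine Finset.sum_congr rfl (fun j _ => chi_congr ?_)
    constructor
    · rintro ⟨h1, h2, h3 | h3⟩
      · exact ⟨h1, h2, Or.inr ⟨h3.2, h3.1⟩⟩
      · exact ⟨h1, h2, Or.inl ⟨h3.2, h3.1⟩⟩
    · rintro ⟨h1, h2, h3 | h3⟩
      · exact ⟨h1, h2, Or.inr ⟨h3.2, h3.1⟩⟩
      · exact ⟨h1, h2, Or.inl ⟨h3.2, h3.1⟩⟩
  have hs1supp : ∀ a b, s1 a b ≠ 0 → R.Adj (0, a) (0, b) := by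
    intro a b h
    rw [hs1val] at h
    obtain ⟨j, _, hj⟩ := Finset.exists_ne_zero_of_sum_ne_zero h
    have hprop : p0 j ≠ j ∧ β0 j = 1 ∧ ((a = j ∧ b = p0 j) ∨ (a = p0 j ∧ b = j)) := by
      by_contra hc
      exact hj (chi_neg hc)
    obtain ⟨h1, _, h3⟩ := hprop
    have hadj : R.Adj (0, j) (0, p0 j) := (hG0 _ _).mp (h0adj j h1)
    rcases h3 with ⟨ha, hb⟩ | ⟨ha, hb⟩
    · subst ha; subst hb; exact hadj
    · subst ha; subst hb; exact hadj.symm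
  have hs1deg : ∀ j, (∑ b, s1 j b) = r j := by
    intro j
    have hpb := pair_boundary p0 β0 r (fun j => j) p0 (fun a => a)
      (fun j hj => rfl) (fun j hj => rfl) (fun j hj e => hj e.symm) h0bd j
    have h2 : (∑ a : Fin s, chi (a = j) * (∑ b, s1 a b)) = ∑ b, s1 j b := by
      rw [Finset.sum_eq_single_of_mem j (mem_univ j)]
      · rw [chi_pos rfl, one_mul]
      · intro b _ hb; rw [chi_neg hb, zero_mul]
    have hconv : (∑ a : Fin s, chi (a = j) * (∑ b, s1 a b))
        = (∑ a : Fin s, chi (a = j) * (∑ b, ∑ j' : Fin s, chi (p0 j' ≠ j' ∧ β0 j' = 1 ∧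
          ((a = j' ∧ b = p0 j') ∨ (a = p0 j' ∧ b = j'))))) := by
      simp only [hs1val]
    rw [← h2, hconv]
    exact hpb
  -- oth facts
  have hoth_ne0 : ∀ a : Fin 3, a ≠ 0 → oth a ≠ 0 := by decide
  have hoth_ne : ∀ a : Fin 3, a ≠ 0 → oth a ≠ a := by decide
  have hoth1 : ∀ a : Fin 3, a ≠ 0 → (oth a = 1 ↔ a = 2) := by decide
  have hoth2 : ∀ a : Fin 3, a ≠ 0 → (oth a = 2 ↔ a = 1) := by decide
  -- the edge coloring
  set gfun : (Fin 3 × Fin s) → (Fin 3 × Fin s) → Fin 3 := fun u v =>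
    if u.1 = 0 ∧ v.1 = 0 then (if s1 u.2 v.2 = 1 then 1 else 2)
    else if u.1 = 0 then oth (f v)
    else if v.1 = 0 then oth (f u)
    else if f u = f v then (if dm u v = 1 then oth (f u) else 0) else 0 with hgfdef
  have hgfval : ∀ u v, gfun u v =
    (if u.1 = 0 ∧ v.1 = 0 then (if s1 u.2 v.2 = 1 then 1 else 2)
    else if u.1 = 0 then oth (f v)
    else if v.1 = 0 then oth (f u)
    else if f u = f v then (if dm u v = 1 then oth (f u) else 0) else 0) := fun _ _ => rfl
  have hgfsym : ∀ u v, gfun u v = gfun v u := by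
    intro u v
    rw [hgfval, hgfval]
    by_cases hu : u.1 = 0 <;> by_cases hv : v.1 = 0
    · rw [if_pos (show u.1 = 0 ∧ v.1 = 0 from ⟨hu, hv⟩),
        if_pos (show v.1 = 0 ∧ u.1 = 0 from ⟨hv, hu⟩), hs1sym]
    · rw [if_neg (show ¬(u.1 = 0 ∧ v.1 = 0) from fun h => hv h.2), if_pos hu,
        if_neg (show ¬(v.1 = 0 ∧ u.1 = 0) from fun h => hv h.1), if_neg hv, if_pos hu]
    · rw [if_neg (show ¬(u.1 = 0 ∧ v.1 = 0) from fun h => hu h.1), if_neg hu, if_pos hv,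
        if_neg (show ¬(v.1 = 0 ∧ u.1 = 0) from fun h => hu h.2), if_pos hv]
    · rw [if_neg (show ¬(u.1 = 0 ∧ v.1 = 0) from fun h => hu h.1), if_neg hu, if_neg hv,
        if_neg (show ¬(v.1 = 0 ∧ u.1 = 0) from fun h => hv h.1), if_neg hv, if_neg hu]
      by_cases hfe : f u = f v
      · rw [if_pos hfe, if_pos hfe.symm, hdmsym, hfe]
      · rw [if_neg hfe, if_neg (show ¬ f v = f u from fun h => hfe h.symm)]
  set g : Sym2 (Fin 3 × Fin s) → Fin 3 := Sym2.lift ⟨gfun, hgfsym⟩ with hgdef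
  have hg : ∀ u v, g s(u, v) = gfun u v := fun _ _ => rfl
  have hne1 : ∀ jj : Fin s, ((1 : Fin 3), jj).1 ≠ 0 :=
    fun jj h => absurd (show (1 : Fin 3) = 0 from h) (by decide)
  have hne2 : ∀ jj : Fin s, ((2 : Fin 3), jj).1 ≠ 0 :=
    fun jj h => absurd (show (2 : Fin 3) = 0 from h) (by decide)
  refine ⟨f, g, ?_, ?_, ?_⟩
  · -- injectivity on columns
    intro j
    have h01 : f (0, j) ≠ f (1, j) := by
      rw [hf0 (0, j) rfl]
      exact fun h => (hfne0 (1, j) (hne1 j)) h.symm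
    have h02 : f (0, j) ≠ f (2, j) := by
      rw [hf0 (0, j) rfl]
      exact fun h => (hfne0 (2, j) (hne2 j)) h.symm
    have h12 : f (1, j) ≠ f (2, j) := by
      intro h
      have het := (hfeq (1, j) (2, j) (hne1 j) (hne2 j)).mp h
      rw [hetval, hetval] at het
      rw [chi_neg (show ¬((1 : Fin 3), j).1 = 2 from
          fun hh => absurd (show (1 : Fin 3) = 2 from hh) (by decide)),
        chi_pos (show ((2 : Fin 3), j).1 = 2 from rfl)] at het
      have h2 := add_left_cancel het
      exact absurd h2 (by decide)
    intro a b hab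
    rcases hfin3 a with ha | ha | ha <;> rcases hfin3 b with hb | hb | hb <;>
      subst ha <;> subst hb <;>
      first
      | rfl
      | exact absurd hab h01
      | exact absurd hab h02
      | exact absurd hab h12
      | exact absurd hab.symm h01
      | exact absurd hab.symm h02
      | exact absurd hab.symm h12
  · -- edges avoid endpoint colors
    intro v w hadj
    rw [hg, hgfval]
    by_cases hv : v.1 = 0 <;> by_cases hw : w.1 = 0
    · rw [if_pos (show v.1 = 0 ∧ w.1 = 0 from ⟨hv, hw⟩), hf0 v hv]
      by_cases h1 : s1 v.2 w.2 = 1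
      · rw [if_pos h1]; decide
      · rw [if_neg h1]; decide
    · rw [if_neg (show ¬(v.1 = 0 ∧ w.1 = 0) from fun h => hw h.2), if_pos hv, hf0 v hv]
      exact fun h => (hoth_ne0 (f w) (hfne0 w hw)) h.symm
    · rw [if_neg (show ¬(v.1 = 0 ∧ w.1 = 0) from fun h => hv h.1), if_neg hv, if_pos hw]
      exact fun h => (hoth_ne (f v) (hfne0 v hv)) h.symm
    · rw [if_neg (show ¬(v.1 = 0 ∧ w.1 = 0) from fun h => hv h.1), if_neg hv, if_neg hw]
      by_cases hfe : f v = f w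
      · rw [if_pos hfe]
        by_cases hd : dm v w = 1
        · rw [if_pos hd]
          exact fun h => (hoth_ne (f v) (hfne0 v hv)) h.symm
        · rw [if_neg hd]
          exact fun h => (hfne0 v hv) h
      · rw [if_neg hfe]
        exact fun h => (hfne0 v hv) h
  · -- parity condition
    intro c j
    have hcast : ∀ (c : Fin 3) (v : Fin 3 × Fin s),
        ((dColor R g c v : ℕ) : Z2) = ∑ w, chi (R.Adj v w ∧ gfun v w = c) := by
      intro c v
      have h1 : dColor R g c v = {w | R.Adj v w ∧ g s(v, w) = c}.ncard := rfl
      rw [h1, ncard_to_sum]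
      exact Finset.sum_congr rfl (fun w _ => chi_congr (by rw [hg]))
    rw [even_iff_z2]
    push_cast
    rw [hcast, hcast, hcast]
    -- helper: dm vanishes on row-0 or cross-color pairs
    have hdm0 : ∀ a b : Fin 3 × Fin s, (a.1 = 0 ∨ b.1 = 0 ∨ f a ≠ f b ∨ ¬ R.Adj a b) →
        dm a b = 0 := by
      intro a b h
      by_contra hc
      obtain ⟨k1, k2, k3, k4⟩ := hdmsupp a b hc
      rcases h with h | h | h | h
      · exact k2 h
      · exact k3 h
      · exact h k4
      · exact h k1
    have hz2cases : ∀ x : Z2, x ≠ 1 → x = 0 := by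
      intro x hx
      rcases z2_cases x with h | h
      · exact h
      · exact absurd h hx
    -- row-0, color 0
    have hT0row0 : (∑ w, chi (R.Adj (0, j) w ∧ gfun (0, j) w = 0)) = 0 := by
      refine Finset.sum_eq_zero (fun w _ => ?_)
      refine chi_neg (fun h => ?_)
      rw [hgfval] at h
      by_cases hw : w.1 = 0
      · rw [if_pos (show ((0 : Fin 3), j).1 = 0 ∧ w.1 = 0 from ⟨rfl, hw⟩)] at h
        by_cases hs : s1 ((0 : Fin 3), j).2 w.2 = 1
        · rw [if_pos hs] at h
          exact absurd h.2 (by decide)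
        · rw [if_neg hs] at h
          exact absurd h.2 (by decide)
      · rw [if_neg (show ¬(((0 : Fin 3), j).1 = 0 ∧ w.1 = 0) from fun hh => hw hh.2),
          if_pos (show ((0 : Fin 3), j).1 = 0 from rfl)] at h
        exact (hoth_ne0 (f w) (hfne0 w hw)) h.2
    -- lower rows, color 0
    have hTL0 : ∀ i : Fin 3, i ≠ 0 → (∑ w, chi (R.Adj (i, j) w ∧ gfun (i, j) w = 0))
        = (∑ w, chi (R.Adj (i, j) w ∧ w.1 ≠ 0)) + Dv (i, j) := by
      intro i hi
      have hi' : ((i : Fin 3), j).1 ≠ 0 := hi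
      rw [hDvval, ← Finset.sum_add_distrib]
      refine Finset.sum_congr rfl (fun w _ => ?_)
      rw [hgfval]
      rw [if_neg (show ¬(((i : Fin 3), j).1 = 0 ∧ w.1 = 0) from fun hh => hi' hh.1),
        if_neg hi']
      by_cases hw : w.1 = 0
      · rw [if_pos hw]
        rw [show chi (R.Adj (i, j) w ∧ oth (f (i, j)) = 0) = 0 from
            chi_neg (fun hh => (hoth_ne0 _ (hfne0 (i, j) hi')) hh.2),
          show chi (R.Adj (i, j) w ∧ w.1 ≠ 0) = 0 from chi_neg (fun hh => hh.2 hw),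
          hdm0 (i, j) w (Or.inr (Or.inl hw)), add_zero]
      · rw [if_neg hw]
        by_cases hfe : f (i, j) = f w
        · rw [if_pos hfe]
          by_cases hd : dm (i, j) w = 1
          · rw [if_pos hd]
            have hadj : R.Adj (i, j) w := (hdmsupp _ _ (by rw [hd]; exact one_ne_zero)).1
            rw [show chi (R.Adj (i, j) w ∧ oth (f (i, j)) = 0) = 0 from
                chi_neg (fun hh => (hoth_ne0 _ (hfne0 (i, j) hi')) hh.2),
              chi_pos (show R.Adj (i, j) w ∧ w.1 ≠ 0 from ⟨hadj, hw⟩), hd]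
            decide
          · rw [if_neg hd, hz2cases _ hd, add_zero]
            exact chi_congr ⟨fun hh => ⟨hh.1, hw⟩, fun hh => ⟨hh.1, rfl⟩⟩
        · rw [if_neg hfe, hdm0 (i, j) w (Or.inr (Or.inr (Or.inl hfe))), add_zero]
          exact chi_congr ⟨fun hh => ⟨hh.1, hw⟩, fun hh => ⟨hh.1, rfl⟩⟩
    -- lower rows, colors 1 and 2
    have hTL1 : ∀ i : Fin 3, i ≠ 0 → (∑ w, chi (R.Adj (i, j) w ∧ gfun (i, j) w = 1))
        = chi (f (i, j) = 2) * (e0up (i, j) + Dv (i, j)) := by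
      intro i hi
      have hi' : ((i : Fin 3), j).1 ≠ 0 := hi
      rw [he0upval, hDvval, ← Finset.sum_add_distrib, Finset.mul_sum]
      refine Finset.sum_congr rfl (fun w _ => ?_)
      rw [hgfval]
      rw [if_neg (show ¬(((i : Fin 3), j).1 = 0 ∧ w.1 = 0) from fun hh => hi' hh.1),
        if_neg hi']
      by_cases hw : w.1 = 0
      · rw [if_pos hw, hdm0 (i, j) w (Or.inr (Or.inl hw)), add_zero, ← chi_and]
        exact chi_congr ⟨fun hh => ⟨(hoth1 _ (hfne0 (i, j) hi')).mp hh.2, hh.1, hw⟩,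
          fun hh => ⟨hh.2.1, (hoth1 _ (hfne0 (i, j) hi')).mpr hh.1⟩⟩
      · rw [if_neg hw,
          show chi (R.Adj (i, j) w ∧ w.1 = 0) = 0 from chi_neg (fun hh => hw hh.2), zero_add]
        by_cases hd : dm (i, j) w = 1
        · have hsupp := hdmsupp (i, j) w (by rw [hd]; exact one_ne_zero)
          rw [if_pos hsupp.2.2.2, if_pos hd, hd, mul_one]
          exact chi_congr ⟨fun hh => (hoth1 _ (hfne0 (i, j) hi')).mp hh.2,
            fun hh => ⟨hsupp.1, (hoth1 _ (hfne0 (i, j) hi')).mpr hh⟩⟩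
        · by_cases hfe : f (i, j) = f w
          · rw [if_pos hfe, if_neg hd, hz2cases _ hd, mul_zero]
            exact chi_neg (fun hh => absurd hh.2 (by decide))
          · rw [if_neg hfe, hz2cases _ hd, mul_zero]
            exact chi_neg (fun hh => absurd hh.2 (by decide))
    have hTL2 : ∀ i : Fin 3, i ≠ 0 → (∑ w, chi (R.Adj (i, j) w ∧ gfun (i, j) w = 2))
        = chi (f (i, j) = 1) * (e0up (i, j) + Dv (i, j)) := by
      intro i hi
      have hi' : ((i : Fin 3), j).1 ≠ 0 := hi
      rw [he0upval, hDvval, ← Finset.sum_add_distrib, Finset.mul_sum]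
      refine Finset.sum_congr rfl (fun w _ => ?_)
      rw [hgfval]
      rw [if_neg (show ¬(((i : Fin 3), j).1 = 0 ∧ w.1 = 0) from fun hh => hi' hh.1),
        if_neg hi']
      by_cases hw : w.1 = 0
      · rw [if_pos hw, hdm0 (i, j) w (Or.inr (Or.inl hw)), add_zero, ← chi_and]
        exact chi_congr ⟨fun hh => ⟨(hoth2 _ (hfne0 (i, j) hi')).mp hh.2, hh.1, hw⟩,
          fun hh => ⟨hh.2.1, (hoth2 _ (hfne0 (i, j) hi')).mpr hh.1⟩⟩
      · rw [if_neg hw,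
          show chi (R.Adj (i, j) w ∧ w.1 = 0) = 0 from chi_neg (fun hh => hw hh.2), zero_add]
        by_cases hd : dm (i, j) w = 1
        · have hsupp := hdmsupp (i, j) w (by rw [hd]; exact one_ne_zero)
          rw [if_pos hsupp.2.2.2, if_pos hd, hd, mul_one]
          exact chi_congr ⟨fun hh => (hoth2 _ (hfne0 (i, j) hi')).mp hh.2,
            fun hh => ⟨hsupp.1, (hoth2 _ (hfne0 (i, j) hi')).mpr hh⟩⟩
        · by_cases hfe : f (i, j) = f w
          · rw [if_pos hfe, if_neg hd, hz2cases _ hd, mul_zero]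
            exact chi_neg (fun hh => absurd hh.2 (by decide))
          · rw [if_neg hfe, hz2cases _ hd, mul_zero]
            exact chi_neg (fun hh => absurd hh.2 (by decide))
    -- row-0, color 1
    have hS1col : (∑ w : Fin 3 × Fin s, chi (w.1 = 0) * s1 j w.2) = ∑ b, s1 j b := by
      rw [Fintype.sum_prod_type, Fin.sum_univ_three]
      have t0 : (∑ b, chi (((0 : Fin 3), b).1 = 0) * s1 j b) = ∑ b, s1 j b :=
        Finset.sum_congr rfl (fun b _ => by rw [chi_pos rfl, one_mul])
      have t1 : (∑ b, chi (((1 : Fin 3), b).1 = 0) * s1 j b) = 0 :=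
        Finset.sum_eq_zero (fun b _ => by rw [chi_neg (hne1 b), zero_mul])
      have t2 : (∑ b, chi (((2 : Fin 3), b).1 = 0) * s1 j b) = 0 :=
        Finset.sum_eq_zero (fun b _ => by rw [chi_neg (hne2 b), zero_mul])
      rw [t0, t1, t2, add_zero, add_zero]
    have hT1row0 : (∑ w, chi (R.Adj (0, j) w ∧ gfun (0, j) w = 1))
        = (∑ b, s1 j b) + (∑ w, chi (R.Adj (0, j) w ∧ w.1 ≠ 0 ∧ f w = 2)) := by
      rw [← hS1col, ← Finset.sum_add_distrib]
      refine Finset.sum_congr rfl (fun w _ => ?_)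
      rw [hgfval]
      by_cases hw : w.1 = 0
      · rw [if_pos (show ((0 : Fin 3), j).1 = 0 ∧ w.1 = 0 from ⟨rfl, hw⟩), chi_pos hw, one_mul,
          show chi (R.Adj (0, j) w ∧ w.1 ≠ 0 ∧ f w = 2) = 0 from
            chi_neg (fun hh => hh.2.1 hw), add_zero]
        by_cases hs : s1 ((0 : Fin 3), j).2 w.2 = 1
        · rw [if_pos hs]
          have hadj0 : R.Adj (0, j) (0, w.2) := hs1supp j w.2 (by
            rw [show s1 j w.2 = s1 ((0 : Fin 3), j).2 w.2 from rfl, hs]; exact one_ne_zero)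
          have hw' : w = ((0 : Fin 3), w.2) := Prod.ext hw rfl
          rw [chi_pos (show R.Adj (0, j) w ∧ (1 : Fin 3) = 1 from ⟨by rw [hw']; exact hadj0, rfl⟩),
            show s1 j w.2 = s1 ((0 : Fin 3), j).2 w.2 from rfl, hs]
        · rw [if_neg hs,
            show s1 j w.2 = s1 ((0 : Fin 3), j).2 w.2 from rfl, hz2cases _ hs]
          exact chi_neg (fun hh => absurd hh.2 (by decide))
      · rw [if_neg (show ¬(((0 : Fin 3), j).1 = 0 ∧ w.1 = 0) from fun hh => hw hh.2),
          if_pos (show ((0 : Fin 3), j).1 = 0 from rfl), chi_neg hw, zero_mul, zero_add]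
        exact chi_congr ⟨fun hh => ⟨hh.1, hw, (hoth1 _ (hfne0 w hw)).mp hh.2⟩,
          fun hh => ⟨hh.1, (hoth1 _ (hfne0 w hw)).mpr hh.2.2⟩⟩
    -- row-0, color 2
    have hT2row0 : (∑ w, chi (R.Adj (0, j) w ∧ gfun (0, j) w = 2))
        = ((∑ w, chi (R.Adj (0, j) w ∧ w.1 = 0)) + (∑ b, s1 j b))
          + (∑ w, chi (R.Adj (0, j) w ∧ w.1 ≠ 0 ∧ f w = 1)) := by
      rw [← hS1col, ← Finset.sum_add_distrib, ← Finset.sum_add_distrib]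
      refine Finset.sum_congr rfl (fun w _ => ?_)
      rw [hgfval]
      by_cases hw : w.1 = 0
      · rw [if_pos (show ((0 : Fin 3), j).1 = 0 ∧ w.1 = 0 from ⟨rfl, hw⟩), chi_pos hw, one_mul,
          show chi (R.Adj (0, j) w ∧ w.1 ≠ 0 ∧ f w = 1) = 0 from
            chi_neg (fun hh => hh.2.1 hw), add_zero]
        by_cases hs : s1 ((0 : Fin 3), j).2 w.2 = 1
        · rw [if_pos hs]
          have hadj0 : R.Adj (0, j) (0, w.2) := hs1supp j w.2 (by
            rw [show s1 j w.2 = s1 ((0 : Fin 3), j).2 w.2 from rfl, hs]; exact one_ne_zero)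
          have hw' : w = ((0 : Fin 3), w.2) := Prod.ext hw rfl
          rw [show chi (R.Adj (0, j) w ∧ (1 : Fin 3) = 2) = 0 from
              chi_neg (fun hh => absurd hh.2 (by decide)),
            chi_pos (show R.Adj (0, j) w ∧ w.1 = 0 from ⟨by rw [hw']; exact hadj0, hw⟩),
            show s1 j w.2 = s1 ((0 : Fin 3), j).2 w.2 from rfl, hs]
          decide
        · rw [if_neg hs, show s1 j w.2 = s1 ((0 : Fin 3), j).2 w.2 from rfl, hz2cases _ hs,
            add_zero]
          exact chi_congr ⟨fun hh => ⟨hh.1, hw⟩, fun hh => ⟨hh.1, rfl⟩⟩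
      · rw [if_neg (show ¬(((0 : Fin 3), j).1 = 0 ∧ w.1 = 0) from fun hh => hw hh.2),
          if_pos (show ((0 : Fin 3), j).1 = 0 from rfl), chi_neg hw, zero_mul,
          show chi (R.Adj (0, j) w ∧ w.1 = 0) = 0 from chi_neg (fun hh => hw hh.2),
          add_zero, zero_add]
        exact chi_congr ⟨fun hh => ⟨hh.1, hw, (hoth2 _ (hfne0 w hw)).mp hh.2⟩,
          fun hh => ⟨hh.1, (hoth2 _ (hfne0 w hw)).mpr hh.2.2⟩⟩
    -- assembling
    have hflip : ∀ v : Fin 3 × Fin s, v.1 ≠ 0 → chi (f v = 1) = 1 + chi (f v = 2) := by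
      intro v hv
      rcases hfL v hv with h | h
      · rw [h, chi_pos rfl, chi_neg (by decide)]
        decide
      · rw [h, chi_neg (by decide), chi_pos rfl]
        decide
    have hS : (∑ b, s1 j b) = (∑ w, chi (R.Adj (0, j) w ∧ w.1 ≠ 0 ∧ f w = 2))
        + chi (f (1, j) = 2) * (e0up (1, j) + Dv (1, j))
        + chi (f (2, j) = 2) * (e0up (2, j) + Dv (2, j)) := (hs1deg j).trans (hrval j)
    have hBC : (∑ w, chi (R.Adj (0, j) w ∧ w.1 ≠ 0 ∧ f w = 1))
        + (∑ w, chi (R.Adj (0, j) w ∧ w.1 ≠ 0 ∧ f w = 2))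
        = ∑ w, chi (R.Adj (0, j) w ∧ w.1 ≠ 0) := by
      rw [← Finset.sum_add_distrib]
      refine Finset.sum_congr rfl (fun w _ => ?_)
      by_cases hA : R.Adj (0, j) w ∧ w.1 ≠ 0
      · rcases hfL w hA.2 with h | h
        · rw [chi_pos (show R.Adj (0, j) w ∧ w.1 ≠ 0 ∧ f w = 1 from ⟨hA.1, hA.2, h⟩),
            show chi (R.Adj (0, j) w ∧ w.1 ≠ 0 ∧ f w = 2) = 0 from
              chi_neg (fun hh => absurd (h.symm.trans hh.2.2) (by decide)),
            chi_pos hA, add_zero]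
        · rw [show chi (R.Adj (0, j) w ∧ w.1 ≠ 0 ∧ f w = 1) = 0 from
              chi_neg (fun hh => absurd (h.symm.trans hh.2.2) (by decide)),
            chi_pos (show R.Adj (0, j) w ∧ w.1 ≠ 0 ∧ f w = 2 from ⟨hA.1, hA.2, h⟩),
            chi_pos hA, zero_add]
      · rw [show chi (R.Adj (0, j) w ∧ w.1 ≠ 0 ∧ f w = 1) = 0 from
            chi_neg (fun hh => hA ⟨hh.1, hh.2.1⟩),
          show chi (R.Adj (0, j) w ∧ w.1 ≠ 0 ∧ f w = 2) = 0 from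
            chi_neg (fun hh => hA ⟨hh.1, hh.2.1⟩),
          chi_neg hA, add_zero]
    have hHI : Dv (1, j) + Dv (2, j) = (∑ w, chi (R.Adj (1, j) w ∧ w.1 ≠ 0))
        + (∑ w, chi (R.Adj (2, j) w ∧ w.1 ≠ 0)) := (hddeg j).trans (hqLval j)
    have hsplitdeg : ∀ v : Fin 3 × Fin s, (∑ w, chi (R.Adj v w))
        = (∑ w, chi (R.Adj v w ∧ w.1 = 0)) + (∑ w, chi (R.Adj v w ∧ w.1 ≠ 0)) := by
      intro v
      rw [← Finset.sum_add_distrib]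
      refine Finset.sum_congr rfl (fun w _ => ?_)
      by_cases hA : R.Adj v w
      · by_cases hw : w.1 = 0
        · rw [chi_pos hA, chi_pos (show R.Adj v w ∧ w.1 = 0 from ⟨hA, hw⟩),
            show chi (R.Adj v w ∧ w.1 ≠ 0) = 0 from chi_neg (fun hh => hh.2 hw), add_zero]
        · rw [chi_pos hA, show chi (R.Adj v w ∧ w.1 = 0) = 0 from
              chi_neg (fun hh => hw hh.2),
            chi_pos (show R.Adj v w ∧ w.1 ≠ 0 from ⟨hA, hw⟩), zero_add]
      · rw [chi_neg hA, show chi (R.Adj v w ∧ w.1 = 0) = 0 from chi_neg (fun hh => hA hh.1),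
          show chi (R.Adj v w ∧ w.1 ≠ 0) = 0 from chi_neg (fun hh => hA hh.1), add_zero]
    have hdeg : ((∑ w, chi (R.Adj (0, j) w ∧ w.1 = 0)) + (∑ w, chi (R.Adj (0, j) w ∧ w.1 ≠ 0)))
        + (e0up (1, j) + (∑ w, chi (R.Adj (1, j) w ∧ w.1 ≠ 0)))
        + (e0up (2, j) + (∑ w, chi (R.Adj (2, j) w ∧ w.1 ≠ 0))) = 0 := by
      have h := heulZ j
      rw [hsplitdeg (0, j), hsplitdeg (1, j), hsplitdeg (2, j),
        ← he0upval (1, j), ← he0upval (2, j)] at h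
      exact h
    have z2_fin0 : ∀ D E H I : Z2, H + I = D + E → 0 + (D + H) + (E + I) = 0 := by decide
    have z2_fin1 : ∀ C P Q : Z2, ((C + P + Q) + C) + P + Q = 0 := by decide
    rcases hfin3 c with hc | hc | hc <;> subst hc
    · rw [hT0row0, hTL0 1 (by decide), hTL0 2 (by decide)]
      exact z2_fin0 _ _ _ _ hHI
    · rw [hT1row0, hTL1 1 (by decide), hTL1 2 (by decide), hS]
      exact z2_fin1 _ _ _
    · rw [hT2row0, hTL2 1 (by decide), hTL2 2 (by decide),
        hflip (1, j) (hne1 j), hflip (2, j) (hne2 j), hS]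
      exact z2_fin2 _ _ _ _ _ _ _ _ _ _ _ _ hBC hHI hdeg





end MainProof
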